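/- Let m, k be natural numbers and let A be a subring of the product ring ∏_{i : Fin m} ℤ. Suppose n ∈ A is an element such that for every index i there exists a natural number d_i ≥ 1 with n_i = k^{d_i} (the i-th component of n is a positive power of k). Then the image of the element (k, k, …, k) ∈ A in the localization of A away from n is a unit. -/
import Mathlib

set_option maxHeartbeats 1000000
set_option synthInstance.maxHeartbeats 200000

/-- Let `A` be a subring of `∏_{i : Fin m} ℤ` and let `n ∈ A` be an element each of
whose components is a positive power of `k`. Then the constant tuple `(k, …, k)`
becomes a unit in the localization of `A` away from `n`. -/
theorem stmt7 (m k : ℕ) (A : Subring (Fin m → ℤ)) (n : A)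
    (h : ∀ i : Fin m, ∃ d : ℕ, 1 ≤ d ∧ (n : Fin m → ℤ) i = (k : ℤ) ^ d) :
    IsUnit (algebraMap A (Localization.Away n) (k : A)) := by
  choose d hd1 hd2 using h
  -- the product of (n - k^{d i}) over all components vanishes
  have hprod : ∏ i : Fin m, (n - (k : A) ^ d i) = 0 := by
    apply Subtype.ext
    show A.subtype (∏ i : Fin m, (n - (k : A) ^ d i)) = 0
    rw [map_prod]
    funext j
    rw [Finset.prod_apply]
    apply Finset.prod_eq_zero (Finset.mem_univ j)
    show ((n - (k : A) ^ d j : A) : Fin m → ℤ) j = 0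
    push_cast
    simp [hd2 j]
  -- hence n^m ≡ 0 mod the ideal generated by k
  have hmem : (n : A) ^ m ∈ Ideal.span {(k : A)} := by
    rw [← Ideal.Quotient.eq_zero_iff_mem]
    set f := Ideal.Quotient.mk (Ideal.span {(k : A)}) with hf
    have hk : f (k : A) = 0 :=
      Ideal.Quotient.eq_zero_iff_mem.mpr (Ideal.subset_span rfl)
    have h0 := congrArg f hprod
    rw [map_prod, map_zero] at h0
    calc f (n ^ m)
        = ∏ _i : Fin m, f n := by
          rw [map_pow, Finset.prod_const, Finset.card_univ, Fintype.card_fin]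
      _ = ∏ i : Fin m, f (n - (k : A) ^ d i) := by
          refine Finset.prod_congr rfl fun i _ => ?_
          rw [map_sub, map_pow, hk, zero_pow (Nat.one_le_iff_ne_zero.mp (hd1 i)), sub_zero]
      _ = 0 := h0
  obtain ⟨x, hx⟩ := Ideal.mem_span_singleton'.mp hmem
  -- n is a unit in the localization, hence so is n^m = x * k, hence so is k
  have hn : IsUnit (algebraMap A (Localization.Away n) n) :=
    IsLocalization.Away.algebraMap_isUnit n
  have hu := hn.pow m
  rw [← map_pow, ← hx, map_mul] at hu
  exact isUnit_of_mul_isUnit_right hu
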